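/- Define Θ_{i j̄} = Φ_i Φ_{j̄}/Φ² and ĝ_{i j̄} = Φ_{i j̄}/Φ. Then the trace of Θ with respect to ĝ equals 1, i.e., Σ_{i,j} ĝ^{i j̄} Θ_{i j̄} = 1, where ĝ^{i j̄} is the inverse matrix of ĝ. -/

import Mathlib

/-- `Φᵢ = z̄ᵢ Φ^(1−2kᵢ)/Z`. -/
noncomputable def phiD (k1 k2 Φv Zv : ℝ) (z : ℂ × ℂ) (i : Fin 2) : ℂ :=
  (starRingEnd ℂ) (if i = 0 then z.1 else z.2)
    * ((Φv ^ (1 - 2 * (if i = 0 then k1 else k2)) : ℝ) : ℂ) / ((Zv : ℝ) : ℂ)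

/-- The explicit formula for the mixed Wirtinger second derivatives `Φ_{i j̄}`. -/
noncomputable def hessEntry (k1 k2 Φv Zv : ℝ) (z : ℂ × ℂ) (i j : Fin 2) : ℂ :=
  (if i = j then ((Φv ^ (1 - 2 * (if i = 0 then k1 else k2)) / Zv : ℝ) : ℂ) else 0)
    + (((1 - 2 * (if i = 0 then k1 else k2) - 2 * (if j = 0 then k1 else k2)
        + 4 / Zv * (k1 ^ 2 * ‖z.1‖ ^ 2 * Φv ^ (-(2 * k1))
            + k2 ^ 2 * ‖z.2‖ ^ 2 * Φv ^ (-(2 * k2)))) : ℝ) : ℂ)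
      * phiD k1 k2 Φv Zv z i * (starRingEnd ℂ) (phiD k1 k2 Φv Zv z j) / ((Φv : ℝ) : ℂ)

noncomputable def SC (k1 k2 A B : ℝ) (z : ℂ × ℂ) : ℂ :=
  (k1:ℂ)^2 * ((‖z.1‖:ℝ):ℂ)^2 * (A:ℂ) + (k2:ℂ)^2 * ((‖z.2‖:ℝ):ℂ)^2 * (B:ℂ)

set_option maxHeartbeats 1600000 in
/-- With `Θ_{i j̄} = Φᵢ Φ_{j̄}/Φ²` and `ĝ_{i j̄} = Φ_{i j̄}/Φ`, the trace of `Θ` with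
respect to `ĝ` equals 1, i.e. `Σ_{i,j} ĝ^{i j̄} Θ_{i j̄} = tr(ĝ⁻¹ Θ) = 1`. -/
theorem stmt_9 (k1 k2 : ℝ) (hk1 : 0 < k1) (hk12 : k1 ≤ k2) (hsum : k1 + k2 = 1)
    (z : ℂ × ℂ) (hz : z ≠ 0) (Φv : ℝ) (hΦ : 0 < Φv)
    (heq : ‖z.1‖ ^ 2 * Φv ^ (-(2 * k1)) + ‖z.2‖ ^ 2 * Φv ^ (-(2 * k2)) = 1)
    (Zv : ℝ)
    (hZ : Zv = 2 * (k1 * ‖z.1‖ ^ 2 * Φv ^ (-(2 * k1))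
        + k2 * ‖z.2‖ ^ 2 * Φv ^ (-(2 * k2)))) :
    ((Matrix.of fun i j : Fin 2 => hessEntry k1 k2 Φv Zv z i j / ((Φv : ℝ) : ℂ))⁻¹
      * Matrix.of fun i j : Fin 2 =>
          phiD k1 k2 Φv Zv z i * (starRingEnd ℂ) (phiD k1 k2 Φv Zv z j) / ((Φv : ℝ) : ℂ) ^ 2).trace
      = 1 := by
  have hΦ0 : Φv ≠ 0 := ne_of_gt hΦ
  obtain ⟨A, hA⟩ : ∃ A : ℝ, A = Φv ^ (-(2 * k1)) := ⟨_, rfl⟩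
  obtain ⟨B, hB⟩ : ∃ B : ℝ, B = Φv ^ (-(2 * k2)) := ⟨_, rfl⟩
  rw [← hA, ← hB] at heq hZ
  have hApos : 0 < A := hA ▸ Real.rpow_pos_of_pos hΦ _
  have hBpos : 0 < B := hB ▸ Real.rpow_pos_of_pos hΦ _
  have hx : (0:ℝ) ≤ ‖z.1‖ ^ 2 := sq_nonneg _
  have hy : (0:ℝ) ≤ ‖z.2‖ ^ 2 := sq_nonneg _
  have hZpos : 0 < Zv := by
    rw [hZ]; nlinarith [mul_nonneg (mul_nonneg (sub_nonneg.mpr hk12) hy) hBpos.le]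
  have hZ0 : Zv ≠ 0 := ne_of_gt hZpos
  have hP1 : Φv ^ (1 - 2 * k1) = Φv * A := by
    rw [hA, show (1 - 2*k1 : ℝ) = 1 + (-(2*k1)) by ring, Real.rpow_add hΦ, Real.rpow_one]
  have hP2 : Φv ^ (1 - 2 * k2) = Φv * B := by
    rw [hB, show (1 - 2*k2 : ℝ) = 1 + (-(2*k2)) by ring, Real.rpow_add hΦ, Real.rpow_one]
  have hΦ0C : ((Φv:ℝ):ℂ) ≠ 0 := by exact_mod_cast hΦ0
  have hPinv : ((Φv:ℝ):ℂ) * ((Φv:ℝ):ℂ)⁻¹ = 1 := mul_inv_cancel₀ (by exact_mod_cast hΦ0)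
  have hZ0C : ((Zv:ℝ):ℂ) ≠ 0 := by exact_mod_cast hZ0
  have hZinv : ((Zv:ℝ):ℂ) * ((Zv:ℝ):ℂ)⁻¹ = 1 := mul_inv_cancel₀ (by exact_mod_cast hZ0)
  have hA0C : ((A:ℝ):ℂ) ≠ 0 := by exact_mod_cast ne_of_gt hApos
  have hB0C : ((B:ℝ):ℂ) ≠ 0 := by exact_mod_cast ne_of_gt hBpos
  have heqC : ((‖z.1‖:ℝ):ℂ) ^ 2 * (A:ℂ) + ((‖z.2‖:ℝ):ℂ) ^ 2 * (B:ℂ) = 1 := by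
    exact_mod_cast heq
  have hZC : ((Zv:ℝ):ℂ) = 2 * ((k1:ℂ) * ((‖z.1‖:ℝ):ℂ) ^ 2 * (A:ℂ)
      + (k2:ℂ) * ((‖z.2‖:ℝ):ℂ) ^ 2 * (B:ℂ)) := by exact_mod_cast hZ
  have hsumC : (k1:ℂ) + (k2:ℂ) = 1 := by exact_mod_cast hsum
  have hc1 : z.1 * (starRingEnd ℂ) z.1 = ((‖z.1‖:ℝ):ℂ) ^ 2 := by
    rw [Complex.mul_conj]; push_cast [Complex.normSq_eq_norm_sq]; ring
  have hc2 : z.2 * (starRingEnd ℂ) z.2 = ((‖z.2‖:ℝ):ℂ) ^ 2 := by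
    rw [Complex.mul_conj]; push_cast [Complex.normSq_eq_norm_sq]; ring
  have e00 : hessEntry k1 k2 Φv Zv z 0 0 / ((Φv:ℝ):ℂ)
      = ((A:ℂ) * ((Zv:ℝ):ℂ)^2 + ((1 - 4*(k1:ℂ)) * ((Zv:ℝ):ℂ) + 4*SC k1 k2 A B z) * ((starRingEnd ℂ) z.1) * z.1 * (A:ℂ)^2) / ((Zv:ℝ):ℂ)^3 := by
    simp only [hessEntry, phiD, SC, ← hA, ← hB]
    norm_num [hP1, hP2]
    field_simp [hΦ0C, hZ0C]
    try rw [div_eq_iff (by simp [mul_eq_zero, hΦ0C, hZ0C])]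
    ring
  have e01 : hessEntry k1 k2 Φv Zv z 0 1 / ((Φv:ℝ):ℂ)
      = (((1 - 2*(k1:ℂ) - 2*(k2:ℂ)) * ((Zv:ℝ):ℂ) + 4*SC k1 k2 A B z) * ((starRingEnd ℂ) z.1) * z.2 * ((A:ℂ)*(B:ℂ))) / ((Zv:ℝ):ℂ)^3 := by
    simp only [hessEntry, phiD, SC, ← hA, ← hB]
    norm_num [hP1, hP2]
    field_simp [hΦ0C, hZ0C]
    try rw [div_eq_iff (by simp [mul_eq_zero, hΦ0C, hZ0C])]
  have e10 : hessEntry k1 k2 Φv Zv z 1 0 / ((Φv:ℝ):ℂ)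
      = (((1 - 2*(k1:ℂ) - 2*(k2:ℂ)) * ((Zv:ℝ):ℂ) + 4*SC k1 k2 A B z) * ((starRingEnd ℂ) z.2) * z.1 * ((A:ℂ)*(B:ℂ))) / ((Zv:ℝ):ℂ)^3 := by
    simp only [hessEntry, phiD, SC, ← hA, ← hB]
    norm_num [hP1, hP2]
    field_simp [hΦ0C, hZ0C]
    try rw [div_eq_iff (by simp [mul_eq_zero, hΦ0C, hZ0C])]
    ring
  have e11 : hessEntry k1 k2 Φv Zv z 1 1 / ((Φv:ℝ):ℂ)
      = ((B:ℂ) * ((Zv:ℝ):ℂ)^2 + ((1 - 4*(k2:ℂ)) * ((Zv:ℝ):ℂ) + 4*SC k1 k2 A B z) * ((starRingEnd ℂ) z.2) * z.2 * (B:ℂ)^2) / ((Zv:ℝ):ℂ)^3 := by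
    simp only [hessEntry, phiD, SC, ← hA, ← hB]
    norm_num [hP1, hP2]
    field_simp [hΦ0C, hZ0C]
    try rw [div_eq_iff (by simp [mul_eq_zero, hΦ0C, hZ0C])]
    ring
  have t00 : phiD k1 k2 Φv Zv z 0 * (starRingEnd ℂ) (phiD k1 k2 Φv Zv z 0) / ((Φv:ℝ):ℂ)^2
      = ((starRingEnd ℂ) z.1) * z.1 * (A:ℂ)^2 / ((Zv:ℝ):ℂ)^2 := by
    simp only [phiD, map_div₀, map_mul, Complex.conj_conj, Complex.conj_ofReal]
    norm_num [hP1, hP2]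
    field_simp [hΦ0C, hZ0C]
    try rw [div_eq_iff (by simp [mul_eq_zero, hΦ0C, hZ0C])]
  have t01 : phiD k1 k2 Φv Zv z 0 * (starRingEnd ℂ) (phiD k1 k2 Φv Zv z 1) / ((Φv:ℝ):ℂ)^2
      = ((starRingEnd ℂ) z.1) * z.2 * ((A:ℂ)*(B:ℂ)) / ((Zv:ℝ):ℂ)^2 := by
    simp only [phiD, map_div₀, map_mul, Complex.conj_conj, Complex.conj_ofReal]
    norm_num [hP1, hP2]
    field_simp [hΦ0C, hZ0C]
    try rw [div_eq_iff (by simp [mul_eq_zero, hΦ0C, hZ0C])]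
  have t10 : phiD k1 k2 Φv Zv z 1 * (starRingEnd ℂ) (phiD k1 k2 Φv Zv z 0) / ((Φv:ℝ):ℂ)^2
      = ((starRingEnd ℂ) z.2) * z.1 * ((A:ℂ)*(B:ℂ)) / ((Zv:ℝ):ℂ)^2 := by
    simp only [phiD, map_div₀, map_mul, Complex.conj_conj, Complex.conj_ofReal]
    norm_num [hP1, hP2]
    field_simp [hΦ0C, hZ0C]
    try rw [div_eq_iff (by simp [mul_eq_zero, hΦ0C, hZ0C])]
  have t11 : phiD k1 k2 Φv Zv z 1 * (starRingEnd ℂ) (phiD k1 k2 Φv Zv z 1) / ((Φv:ℝ):ℂ)^2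
      = ((starRingEnd ℂ) z.2) * z.2 * (B:ℂ)^2 / ((Zv:ℝ):ℂ)^2 := by
    simp only [phiD, map_div₀, map_mul, Complex.conj_conj, Complex.conj_ofReal]
    norm_num [hP1, hP2]
    field_simp [hΦ0C, hZ0C]
    try rw [div_eq_iff (by simp [mul_eq_zero, hΦ0C, hZ0C])]
  have hdet : (Matrix.of fun i j : Fin 2 => hessEntry k1 k2 Φv Zv z i j / ((Φv : ℝ) : ℂ)).det
      = ((A:ℂ) * B) / ((Zv:ℝ):ℂ)^3 := by
    rw [Matrix.det_fin_two]
    simp only [Matrix.of_apply]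
    rw [e00, e01, e10, e11]
    simp only [SC]
    field_simp [hZ0C]
    linear_combination (((A:ℝ):ℂ)*(((Zv:ℝ):ℂ)*(1-4*((k1:ℝ):ℂ)) + 4*(((A:ℝ):ℂ)*((k1:ℝ):ℂ)^2*((‖z.1‖:ℝ):ℂ)^2 + ((k2:ℝ):ℂ)^2*((‖z.2‖:ℝ):ℂ)^2*((B:ℝ):ℂ)))*(((Zv:ℝ):ℂ)^2 + ((B:ℝ):ℂ)*(((Zv:ℝ):ℂ)*(1-4*((k2:ℝ):ℂ)) + 4*(((A:ℝ):ℂ)*((k1:ℝ):ℂ)^2*((‖z.1‖:ℝ):ℂ)^2 + ((k2:ℝ):ℂ)^2*((‖z.2‖:ℝ):ℂ)^2*((B:ℝ):ℂ)))*((starRingEnd ℂ) z.2 * z.2)) - ((A:ℝ):ℂ)*((B:ℝ):ℂ)*((starRingEnd ℂ) z.2 * z.2)*(((Zv:ℝ):ℂ)*(1-((k1:ℝ):ℂ)*2-((k2:ℝ):ℂ)*2) + 4*(((A:ℝ):ℂ)*((k1:ℝ):ℂ)^2*((‖z.1‖:ℝ):ℂ)^2 + ((k2:ℝ):ℂ)^2*((‖z.2‖:ℝ):ℂ)^2*((B:ℝ):ℂ)))^2)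 * hc1 + ((((Zv:ℝ):ℂ)^2 + ((A:ℝ):ℂ)*((‖z.1‖:ℝ):ℂ)^2*(((Zv:ℝ):ℂ)*(1-4*((k1:ℝ):ℂ)) + 4*(((A:ℝ):ℂ)*((k1:ℝ):ℂ)^2*((‖z.1‖:ℝ):ℂ)^2 + ((k2:ℝ):ℂ)^2*((‖z.2‖:ℝ):ℂ)^2*((B:ℝ):ℂ))))*((B:ℝ):ℂ)*(((Zv:ℝ):ℂ)*(1-4*((k2:ℝ):ℂ)) + 4*(((A:ℝ):ℂ)*((k1:ℝ):ℂ)^2*((‖z.1‖:ℝ):ℂ)^2 + ((k2:ℝ):ℂ)^2*((‖z.2‖:ℝ):ℂ)^2*((B:ℝ):ℂ))) - ((A:ℝ):ℂ)*((B:ℝ):ℂ)*((‖z.1‖:ℝ):ℂ)^2*(((Zv:ℝ):ℂ)*(1-((k1:ℝ):ℂ)*2-((k2:ℝ):ℂ)*2) + 4*(((A:ℝ):ℂ)*((k1:ℝ):ℂ)^2*((‖z.1‖:ℝ):ℂ)^2 + ((k2:ℝ):ℂ)^2*((‖z.2‖:ℝ):ℂ)^2*((B:ℝ):ℂ)))^2)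 * hc2 + (((Zv:ℝ):ℂ)^3) * heqC + (((Zv:ℝ):ℂ)^2*(((Zv:ℝ):ℂ) - 2*(((k1:ℝ):ℂ)*((‖z.1‖:ℝ):ℂ)^2*((A:ℝ):ℂ) + ((k2:ℝ):ℂ)*((‖z.2‖:ℝ):ℂ)^2*((B:ℝ):ℂ)))) * hZC
  have htr : (((Matrix.of fun i j : Fin 2 => hessEntry k1 k2 Φv Zv z i j / ((Φv : ℝ) : ℂ)).adjugate)
      * Matrix.of (fun i j : Fin 2 =>
          phiD k1 k2 Φv Zv z i * (starRingEnd ℂ) (phiD k1 k2 Φv Zv z j) / ((Φv : ℝ) : ℂ) ^ 2)).trace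
      = ((A:ℂ) * B) / ((Zv:ℝ):ℂ)^3 := by
    rw [Matrix.adjugate_fin_two, Matrix.trace_fin_two]
    simp only [Matrix.mul_apply, Fin.sum_univ_two, Matrix.of_apply, Matrix.cons_val', Matrix.cons_val_zero,
      Matrix.cons_val_one, Matrix.head_cons, Matrix.head_fin_const, Matrix.empty_val', Matrix.cons_val_fin_one]
    rw [e00, e01, e10, e11, t00, t01, t10, t11]
    simp only [SC]
    field_simp [hZ0C]
    linear_combination (((A:ℝ):ℂ)*((Zv:ℝ):ℂ)^2) * hc1 + (((B:ℝ):ℂ)*((Zv:ℝ):ℂ)^2) * hc2 + (((Zv:ℝ):ℂ)^2) * heqC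
  set g := (Matrix.of fun i j : Fin 2 => hessEntry k1 k2 Φv Zv z i j / ((Φv : ℝ) : ℂ)) with hg
  have hdet0 : g.det ≠ 0 := by
    rw [hdet]
    exact div_ne_zero (mul_ne_zero hA0C hB0C) (pow_ne_zero 3 hZ0C)
  rw [Matrix.inv_def, Ring.inverse_eq_inv, Matrix.smul_mul, Matrix.trace_smul, smul_eq_mul,
    htr, ← hdet, inv_mul_cancel₀ hdet0]
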